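/- Let f be holomorphic on Ω(c,C)^m with asymptotic expansion a, and let k ∈ {0,…,m}. Then the following are equivalent: (1) for every α ∈ supp a and every i ∈ {k+1,…,m}, the exponent αᵢ is a natural number; (2) for every i ∈ {k+1,…,m} and every z ∈ Ω(c,C)^m such that z + 2π√−1·eᵢ ∈ Ω(c,C)^m (where eᵢ is the i-th standard basis vector of ℂ^m), one has f(z + 2π√−1·eᵢ) = f(z). -/

import Mathlib

noncomputable section
open scoped Classical

/-- Logarithmic model of a standard quadratic domain:
`Ω(c,C) = {z : Re z < log c - C·√|Im z|}`. -/
def SQD (c C : ℝ) : Set ℂ := {z : ℂ | z.re < Real.log c - C * Real.sqrt |z.im|}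

/-- The cartesian power `Ω(c,C)^m`. -/
def QDom (c C : ℝ) (m : ℕ) : Set (Fin m → ℂ) := {z | ∀ i, z i ∈ SQD c C}

/-- Open disc `D_R` of radius `R` centred at `0`. -/
def Disc (R : ℝ) : Set ℂ := {w : ℂ | ‖w‖ < R}

/-- Polydisc `D_R^n`. -/
def PDisc (R : ℝ) (n : ℕ) : Set (Fin n → ℂ) := {y | ∀ j, y j ∈ Disc R}

/-- The exponential monomial `exp⟨α,z⟩`. -/
def expMono {m : ℕ} (α : Fin m → ℝ) (z : Fin m → ℂ) : ℂ :=
  Complex.exp (∑ i, (α i : ℂ) * z i)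

/-- Euclidean norm of `E(z) = (exp (Re z₁), …, exp (Re z_m))`. -/
def eNorm {m : ℕ} (z : Fin m → ℂ) : ℝ :=
  Real.sqrt (∑ i, Real.exp ((z i).re) ^ 2)

/-- A generalized power series with natural support: nonnegative exponents, and in each
coordinate the set of exponents below any bound is finite. -/
def NaturalSeries {m : ℕ} (a : (Fin m → ℝ) → ℂ) : Prop :=
  (∀ α, a α ≠ 0 → ∀ i, 0 ≤ α i) ∧
  ∀ i : Fin m, ∀ R : ℝ, 0 < R → {r : ℝ | (∃ α, a α ≠ 0 ∧ α i = r) ∧ r ≤ R}.Finite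

/-- `f` has asymptotic expansion `a` on `Ω(c,C)^m`: for every `ν > 0` there is a smaller
standard quadratic domain on which `f` minus the partial sum of weight `≤ ν` is
`o(‖E(z)‖^ν)` as `‖E(z)‖ → 0`. -/
def HasAsymExp {m : ℕ} (c C : ℝ) (f : (Fin m → ℂ) → ℂ) (a : (Fin m → ℝ) → ℂ) : Prop :=
  NaturalSeries a ∧
  ∀ ν : ℝ, 0 < ν → ∃ c' C' : ℝ, 0 < c' ∧ 0 < C' ∧ SQD c' C' ⊆ SQD c C ∧
    ∃ F : Finset (Fin m → ℝ),
      (∀ α, α ∈ F ↔ a α ≠ 0 ∧ ∑ i, α i ≤ ν) ∧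
      ∀ ε : ℝ, 0 < ε → ∃ δ : ℝ, 0 < δ ∧
        ∀ z ∈ QDom c' C' m, eNorm z < δ →
          ‖f z - ∑ α ∈ F, a α * expMono α z‖ ≤ ε * eNorm z ^ ν

lemma sqrt_add_le (x y : ℝ) (hx : 0 ≤ x) (hy : 0 ≤ y) :
    Real.sqrt (x + y) ≤ Real.sqrt x + Real.sqrt y := by
  rw [show x + y = x + y from rfl]
  have h : x + y ≤ (Real.sqrt x + Real.sqrt y) ^ 2 := by
    have := Real.sqrt_nonneg x
    have := Real.sqrt_nonneg y
    nlinarith [Real.sq_sqrt hx, Real.sq_sqrt hy, mul_nonneg (Real.sqrt_nonneg x) (Real.sqrt_nonneg y)]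
  calc Real.sqrt (x + y) ≤ Real.sqrt ((Real.sqrt x + Real.sqrt y) ^ 2) := Real.sqrt_le_sqrt h
    _ = Real.sqrt x + Real.sqrt y := Real.sqrt_sq (by positivity)

lemma sqrt_abs_add (a b : ℝ) : Real.sqrt |a + b| ≤ Real.sqrt |a| + Real.sqrt |b| := by
  calc Real.sqrt |a + b| ≤ Real.sqrt (|a| + |b|) :=
        Real.sqrt_le_sqrt (abs_add_le a b)
    _ ≤ _ := sqrt_add_le _ _ (abs_nonneg a) (abs_nonneg b)

lemma sqrt_le_half_add (x : ℝ) (hx : 0 ≤ x) : Real.sqrt x ≤ (1 + x) / 2 := by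
  nlinarith [Real.sq_sqrt hx, Real.sqrt_nonneg x, sq_nonneg (Real.sqrt x - 1)]

lemma sqd_open (c C : ℝ) : IsOpen (SQD c C) := by
  have : SQD c C = {z : ℂ | z.re - (Real.log c - C * Real.sqrt |z.im|) < 0} := by
    ext z; simp [SQD, sub_neg]
  rw [this]
  apply isOpen_lt (f := fun z : ℂ => z.re - (Real.log c - C * Real.sqrt |z.im|)) (g := fun _ => (0:ℝ))
  · exact Complex.continuous_re.sub (continuous_const.sub
      (continuous_const.mul (Real.continuous_sqrt.comp (continuous_abs.comp Complex.continuous_im))))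
  · exact continuous_const

lemma qdom_open (c C : ℝ) (m : ℕ) : IsOpen (QDom c C m) := by
  have : QDom c C m = ⋂ i : Fin m, (fun z : Fin m → ℂ => z i) ⁻¹' SQD c C := by
    ext z; simp [QDom]
  rw [this]
  exact isOpen_iInter_of_finite fun i => (sqd_open c C).preimage (continuous_apply i)



section
variable {m : ℕ}

def pshift (m : ℕ) (i : Fin m) : Fin m → ℂ := Pi.single i (((2 * Real.pi : ℝ) : ℂ) * Complex.I)

lemma pshift_re (i j : Fin m) : (pshift m i j).re = 0 := by
  unfold pshift
  rcases eq_or_ne j i with h | h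
  · subst h; simp [Pi.single_apply]
  · simp [Pi.single_apply, h]

lemma pshift_im (i j : Fin m) : (pshift m i j).im = if j = i then 2 * Real.pi else 0 := by
  unfold pshift
  rcases eq_or_ne j i with h | h
  · subst h; simp [Pi.single_apply]
  · simp [Pi.single_apply, h]

lemma eNorm_nonneg (z : Fin m → ℂ) : 0 ≤ eNorm z := Real.sqrt_nonneg _

lemma eNorm_pos (z : Fin m → ℂ) (hm : 0 < m) : 0 < eNorm z := by
  apply Real.sqrt_pos.2
  apply Finset.sum_pos (fun i _ => by positivity)
  exact ⟨⟨0, hm⟩, Finset.mem_univ _⟩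

lemma eNorm_congr_re (z w : Fin m → ℂ) (h : ∀ j, (z j).re = (w j).re) : eNorm z = eNorm w := by
  unfold eNorm; congr 1; exact Finset.sum_congr rfl fun j _ => by rw [h j]

lemma eNorm_add_pshift (z : Fin m → ℂ) (i : Fin m) : eNorm (z + pshift m i) = eNorm z :=
  eNorm_congr_re _ _ fun j => by simp [pshift_re]

lemma eNorm_shift (z : Fin m → ℂ) (t : ℂ) :
    eNorm (fun j => z j + t) = Real.exp t.re * eNorm z := by
  unfold eNorm
  rw [← Real.sqrt_sq (Real.exp_pos t.re).le, ← Real.sqrt_mul (by positivity)]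
  congr 1
  rw [Finset.mul_sum]
  refine Finset.sum_congr rfl fun j _ => ?_
  rw [Complex.add_re, Real.exp_add]
  ring

lemma expMono_norm (α : Fin m → ℝ) (z : Fin m → ℂ) :
    ‖expMono α z‖ = Real.exp (∑ i, α i * (z i).re) := by
  unfold expMono
  rw [Complex.norm_exp]
  congr 1
  rw [Complex.re_sum]
  exact Finset.sum_congr rfl fun j _ => by simp [Complex.mul_re]

lemma expMono_norm_le_one (α : Fin m → ℝ) (z : Fin m → ℂ)
    (hα : ∀ i, 0 ≤ α i) (hz : ∀ i, (z i).re ≤ 0) : ‖expMono α z‖ ≤ 1 := by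
  rw [expMono_norm]
  rw [show (1:ℝ) = Real.exp 0 by simp]
  apply Real.exp_le_exp.2
  apply Finset.sum_nonpos fun j _ => mul_nonpos_of_nonneg_of_nonpos (hα j) (hz j)

lemma expMono_pshift (α : Fin m → ℝ) (z : Fin m → ℂ) (i : Fin m) :
    expMono α (z + pshift m i) =
      Complex.exp ((α i : ℂ) * (((2 * Real.pi : ℝ) : ℂ) * Complex.I)) * expMono α z := by
  unfold expMono
  rw [← Complex.exp_add]
  congr 1
  have : ∀ j, (α j : ℂ) * (z + pshift m i) j = (α j : ℂ) * z j + (α j :ℂ) * pshift m i j := by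
    intro j; simp [mul_add]
  rw [Finset.sum_congr rfl fun j _ => this j, Finset.sum_add_distrib]
  have : ∑ j, (α j : ℂ) * pshift m i j = (α i : ℂ) * (((2 * Real.pi : ℝ) : ℂ) * Complex.I) := by
    unfold pshift
    rw [Finset.sum_eq_single i]
    · simp
    · intro b _ hb; simp [Pi.single_apply, hb]
    · intro h; exact absurd (Finset.mem_univ i) h
  rw [this]; ring

lemma expMono_pshift_nat (α : Fin m → ℝ) (z : Fin m → ℂ) (i : Fin m) (q : ℕ) (hq : α i = q) :
    expMono α (z + pshift m i) = expMono α z := by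
  rw [expMono_pshift, hq]
  have : ((q : ℝ) : ℂ) * (((2 * Real.pi : ℝ) : ℂ) * Complex.I) = (q:ℂ) * (2 * Real.pi * Complex.I) := by
    push_cast; ring
  rw [this, Complex.exp_nat_mul_two_pi_mul_I, one_mul]

/-- membership in SQD after adding a real `t ≤ 0`. -/
lemma sqd_add_real {c C : ℝ} {z : ℂ} (hz : z ∈ SQD c C) (t : ℝ) (ht : t ≤ 0) :
    z + (t : ℂ) ∈ SQD c C := by
  simp only [SQD, Set.mem_setOf_eq] at *
  simpa using by linarith [hz]

end

section
/-- A "subgraph" region `{t : re t < Ψ (im t)}` with `Ψ` continuous is preconnected. -/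
lemma preconnected_subgraph (Ψ : ℝ → ℝ) (hΨ : Continuous Ψ) :
    IsPreconnected {t : ℂ | t.re < Ψ t.im} := by
  have key : {t : ℂ | t.re < Ψ t.im} =
      (fun s : ℂ => ((s.re + Ψ s.im : ℝ) : ℂ) + (s.im : ℝ) * Complex.I) '' {s : ℂ | s.re < 0} := by
    ext t
    constructor
    · intro ht
      refine ⟨((t.re - Ψ t.im : ℝ) : ℂ) + (t.im : ℝ) * Complex.I, ?_, ?_⟩
      · simp only [Set.mem_setOf_eq, Complex.add_re, Complex.ofReal_re, Complex.mul_re,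
          Complex.I_re, Complex.ofReal_im, Complex.I_im]
        have := Set.mem_setOf_eq ▸ ht
        simpa using sub_neg.2 this
      · simp only [Complex.add_re, Complex.ofReal_re, Complex.mul_re, Complex.I_re,
          Complex.ofReal_im, Complex.I_im, Complex.add_im, Complex.mul_im, Complex.ofReal_im]
        apply Complex.ext <;> simp
    · rintro ⟨s, hs, rfl⟩
      simp only [Set.mem_setOf_eq, Complex.add_re, Complex.ofReal_re, Complex.mul_re,
        Complex.I_re, Complex.ofReal_im, Complex.I_im, Complex.add_im, Complex.mul_im] at *
      simpa using hs
  rw [key]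
  apply IsPreconnected.image
  · exact (convex_halfSpace_re_lt 0).isPreconnected
  · apply Continuous.continuousOn
    have h1 : Continuous fun s : ℂ => s.re + Ψ s.im :=
      Complex.continuous_re.add (hΨ.comp Complex.continuous_im)
    exact (Complex.continuous_ofReal.comp h1).add
      ((Complex.continuous_ofReal.comp Complex.continuous_im).mul continuous_const)
end

section
open Filter Topology

/-- Killing lemma: if a finite exponential sum is `O(e^{tE})` as `t → -∞`, all
coefficients with exponent `< E` vanish. -/
lemma kill_coeffs {ι : Type*} [DecidableEq ι] (e : ι → ℝ) (E K ρ : ℝ) :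
    ∀ (A : Finset ι) (c : ι → ℂ), Set.InjOn e A →
    (∀ t : ℝ, t ≤ ρ → ‖∑ b ∈ A, c b * Complex.exp ((t * e b : ℝ) : ℂ)‖ ≤ K * Real.exp (t * E)) →
    ∀ a ∈ A, e a < E → c a = 0 := by
  intro A
  induction A using Finset.strongInduction with
  | _ A ih =>
    intro c inj h a ha hlt
    obtain ⟨a₀, ha₀, hmin⟩ := A.exists_min_image e ⟨a, ha⟩
    have hlt₀ : e a₀ < E := lt_of_le_of_lt (hmin a ha) hlt
    -- first, the minimal coefficient vanishes
    have hc₀ : c a₀ = 0 := by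
      set H : ℝ → ℂ := fun t => ∑ b ∈ A, c b * Complex.exp ((t * (e b - e a₀) : ℝ) : ℂ) with hH
      have fact1 : ∀ t : ℝ, H t = (∑ b ∈ A, c b * Complex.exp ((t * e b : ℝ) : ℂ)) *
          Complex.exp ((-(t * e a₀) : ℝ) : ℂ) := by
        intro t
        rw [Finset.sum_mul]
        refine Finset.sum_congr rfl fun b _ => ?_
        rw [mul_assoc, ← Complex.exp_add]
        congr 2
        push_cast
        ring
      have fact2 : Tendsto H atBot (𝓝 (c a₀)) := by
        have : H = fun t => c a₀ * Complex.exp ((t * (e a₀ - e a₀) : ℝ) : ℂ) +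
            ∑ b ∈ A.erase a₀, c b * Complex.exp ((t * (e b - e a₀) : ℝ) : ℂ) := by
          funext t
          simp only [hH]
          rw [← Finset.add_sum_erase _ _ ha₀]
        rw [this]
        have h1 : Tendsto (fun t : ℝ => c a₀ * Complex.exp ((t * (e a₀ - e a₀) : ℝ) : ℂ))
            atBot (𝓝 (c a₀)) := by
          simp only [sub_self, mul_zero, Complex.ofReal_zero, Complex.exp_zero, mul_one]
          exact tendsto_const_nhds
        have h2 : Tendsto (fun t : ℝ => ∑ b ∈ A.erase a₀,
            c b * Complex.exp ((t * (e b - e a₀) : ℝ) : ℂ)) atBot (𝓝 0) := by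
          have : Tendsto (fun t : ℝ => ∑ b ∈ A.erase a₀,
              c b * Complex.exp ((t * (e b - e a₀) : ℝ) : ℂ)) atBot
              (𝓝 (∑ b ∈ A.erase a₀, 0)) := by
            apply tendsto_finset_sum
            intro b hb
            have hbne : b ≠ a₀ := Finset.ne_of_mem_erase hb
            have hbA : b ∈ A := Finset.mem_of_mem_erase hb
            have hdpos : 0 < e b - e a₀ :=
              sub_pos.2 (lt_of_le_of_ne (hmin b hbA) (fun hh => hbne (inj hbA ha₀ hh.symm)))
            rw [tendsto_zero_iff_norm_tendsto_zero]
            have : ∀ t : ℝ, ‖c b * Complex.exp ((t * (e b - e a₀) : ℝ) : ℂ)‖ =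
                ‖c b‖ * Real.exp (t * (e b - e a₀)) := by
              intro t
              rw [norm_mul, Complex.norm_exp, Complex.ofReal_re]
            simp only [this]
            rw [show (0:ℝ) = ‖c b‖ * 0 by ring]
            apply Tendsto.const_mul
            exact Real.tendsto_exp_atBot.comp (Tendsto.atBot_mul_const hdpos tendsto_id)
          simpa using this
        simpa using h1.add h2
      have fact3 : ∀ t : ℝ, t ≤ ρ → ‖H t‖ ≤ K * Real.exp (t * (E - e a₀)) := by
        intro t ht
        rw [fact1, norm_mul, Complex.norm_exp,
          Complex.ofReal_re]
        calc ‖∑ b ∈ A, c b * Complex.exp ((t * e b : ℝ) : ℂ)‖ * Real.exp (-(t * e a₀))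
            ≤ (K * Real.exp (t * E)) * Real.exp (-(t * e a₀)) := by
              apply mul_le_mul_of_nonneg_right (h t ht) (Real.exp_pos _).le
          _ = K * Real.exp (t * (E - e a₀)) := by
              rw [mul_assoc, ← Real.exp_add]; ring_nf
      have fact4 : Tendsto (fun t : ℝ => K * Real.exp (t * (E - e a₀))) atBot (𝓝 0) := by
        rw [show (0:ℝ) = K * 0 by ring]
        apply Tendsto.const_mul
        exact Real.tendsto_exp_atBot.comp (Tendsto.atBot_mul_const (sub_pos.2 hlt₀) tendsto_id)
      have hH0 : Tendsto H atBot (𝓝 0) := by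
        apply squeeze_zero_norm' _ fact4
        filter_upwards [eventually_le_atBot ρ] with t ht using fact3 t ht
      exact tendsto_nhds_unique fact2 hH0
    rcases eq_or_ne a a₀ with rfl | hne
    · exact hc₀
    · refine ih (A.erase a₀) (Finset.erase_ssubset ha₀) c
        (inj.mono (fun x hx => Finset.mem_of_mem_erase hx)) ?_ a
        (Finset.mem_erase.2 ⟨hne, ha⟩) hlt
      intro t ht
      have : ∑ b ∈ A.erase a₀, c b * Complex.exp ((t * e b : ℝ) : ℂ) =
          ∑ b ∈ A, c b * Complex.exp ((t * e b : ℝ) : ℂ) := by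
        rw [← Finset.add_sum_erase _ _ ha₀, hc₀, zero_mul, zero_add]
      rw [this]
      exact h t ht
end

section
open Polynomial

/-- Generic weights: given a finite set of exponent vectors, there are weights `w j ∈ (1-η, 1]`
separating the values `⟨α, w⟩`. -/
lemma exists_weights (m : ℕ) (F : Finset (Fin m → ℝ)) (η : ℝ) (hη : 0 < η) (hη1 : η < 1) :
    ∃ w : Fin m → ℝ, (∀ j, 1 - η < w j ∧ w j ≤ 1) ∧
      Set.InjOn (fun α : Fin m → ℝ => ∑ j, α j * w j) F := by
  -- polynomial attached to a difference
  set P : (Fin m → ℝ) → (Fin m → ℝ) → Polynomial ℝ := fun α β =>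
    C ((1 - η) * ∑ j, (α j - β j)) + ∑ j : Fin m, C (η * (α j - β j)) * X ^ ((j : ℕ) + 1)
    with hP
  have eval_P : ∀ α β (s : ℝ),
      (P α β).eval s = ∑ j, α j * (1 - η + η * s ^ ((j:ℕ)+1))
        - ∑ j, β j * (1 - η + η * s ^ ((j:ℕ)+1)) := by
    intro α β s
    simp only [hP, eval_add, eval_C, eval_finset_sum, eval_mul, eval_pow, eval_X]
    rw [← Finset.sum_sub_distrib, Finset.mul_sum, ← Finset.sum_add_distrib]
    refine Finset.sum_congr rfl fun j _ => ?_
    ring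
  have P_ne : ∀ α β, α ≠ β → P α β ≠ 0 := by
    intro α β hne
    obtain ⟨j₀, hj₀⟩ : ∃ j, α j - β j ≠ 0 := by
      by_contra hcon
      push_neg at hcon
      exact hne (funext fun j => by linarith [sub_eq_zero.1 (hcon j)])
    intro hzero
    have : (P α β).coeff ((j₀ : ℕ) + 1) = η * (α j₀ - β j₀) := by
      simp only [hP, coeff_add, coeff_C, Nat.add_eq_zero, and_false, if_false,
        Polynomial.finset_sum_coeff, coeff_C_mul, coeff_X_pow]
      rw [if_neg (by simp)]
      have hcong : ∀ x : Fin m, (η * (α x - β x) * if ((j₀:ℕ) + 1 = (x:ℕ) + 1) then (1:ℝ) else 0) =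
          (if j₀ = x then η * (α x - β x) else 0) := by
        intro x
        by_cases hx : j₀ = x
        · subst hx; simp
        · rw [if_neg ?_, if_neg hx]
          · ring
          · simpa [Fin.val_inj] using hx
      rw [Finset.sum_congr rfl fun x _ => hcong x, Finset.sum_ite_eq]
      simp
    rw [hzero] at this
    simp only [coeff_zero] at this
    exact hj₀ (by
      have := this.symm
      rcases mul_eq_zero.1 this with h | h
      · exact absurd h (ne_of_gt hη)
      · exact h)
  -- the bad set of parameters
  set Bad : Set ℝ := ⋃ p ∈ (F ×ˢ F : Finset _).filter (fun p => p.1 ≠ p.2),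
      {s : ℝ | (P p.1 p.2).IsRoot s} with hBad
  have hBadFin : Bad.Finite := by
    apply Set.Finite.biUnion (Finset.finite_toSet _)
    intro p hp
    simp only [Finset.coe_filter, Set.mem_setOf_eq, Finset.mem_filter] at hp
    exact Polynomial.finite_setOf_isRoot (P_ne p.1 p.2 hp.2)
  obtain ⟨s, hs⟩ : ((Set.Ioo (0:ℝ) 1) \ Bad).Nonempty := by
    apply Set.Infinite.nonempty
    exact (Set.Ioo_infinite zero_lt_one).diff hBadFin
  obtain ⟨⟨hs0, hs1⟩, hsbad⟩ := hs
  refine ⟨fun j => 1 - η + η * s ^ ((j:ℕ)+1), fun j => ⟨?_, ?_⟩, ?_⟩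
  · show 1 - η < 1 - η + η * s ^ ((j:ℕ)+1)
    have : 0 < η * s ^ ((j:ℕ)+1) := by positivity
    linarith
  · show 1 - η + η * s ^ ((j:ℕ)+1) ≤ 1
    have h1 : s ^ ((j:ℕ)+1) ≤ 1 := pow_le_one₀ hs0.le hs1.le
    nlinarith
  · intro α hα β hβ heq
    by_contra hne
    apply hsbad
    rw [hBad]
    apply Set.mem_biUnion (show (α, β) ∈ (F ×ˢ F : Finset _).filter (fun p => p.1 ≠ p.2) by
      simp only [Finset.mem_filter, Finset.mem_product]
      exact ⟨⟨Finset.mem_coe.1 hα, Finset.mem_coe.1 hβ⟩, hne⟩)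
    simp only [Set.mem_setOf_eq, Polynomial.IsRoot]
    rw [eval_P]
    exact sub_eq_zero.2 heq
end

section
open Filter Topology

lemma qdom_mono {c C c' C' : ℝ} {m : ℕ} (h : SQD c' C' ⊆ SQD c C) :
    QDom c' C' m ⊆ QDom c C m := fun z hz j => h (hz j)

lemma exp_rpow' (x ν : ℝ) : (Real.exp x) ^ ν = Real.exp (x * ν) := by
  rw [Real.rpow_def_of_pos (Real.exp_pos x), Real.log_exp]

/-- The reverse direction: monodromy invariance forces natural exponents. -/
lemma reverse_dir {m : ℕ} {c C : ℝ} {f : (Fin m → ℂ) → ℂ} {a : (Fin m → ℝ) → ℂ}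
    (ha : HasAsymExp c C f a) (k : ℕ)
    (hper : ∀ i : Fin m, k ≤ (i : ℕ) → ∀ z ∈ QDom c C m,
      z + pshift m i ∈ QDom c C m → f (z + pshift m i) = f z) :
    ∀ α, a α ≠ 0 → ∀ i : Fin m, k ≤ (i : ℕ) → ∃ q : ℕ, α i = q := by
  intro α₀ hα₀ i hik
  have hm : 0 < m := i.pos
  have hα₀nn : ∀ j, 0 ≤ α₀ j := ha.1.1 α₀ hα₀
  set ν : ℝ := (∑ j, α₀ j) + 1 with hν
  have hνsum : 0 ≤ ∑ j, α₀ j := Finset.sum_nonneg fun j _ => hα₀nn j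
  have hν0 : 0 < ν := by rw [hν]; linarith
  have hν1 : 1 ≤ ν := by rw [hν]; linarith
  obtain ⟨c', C', hc', hC', hsub, F, hF, hbound⟩ := ha.2 ν hν0
  have hα₀F : α₀ ∈ F := (hF α₀).2 ⟨hα₀, by rw [hν]; linarith⟩
  obtain ⟨δ, hδ, hδbound⟩ := hbound 1 one_pos
  -- weights
  set η : ℝ := 1 / (2 * ν) with hη
  have hη0 : 0 < η := by rw [hη]; positivity
  have hηhalf : η ≤ 1 / 2 := by
    rw [hη]
    rw [div_le_div_iff₀ (by linarith) (by norm_num)]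
    linarith
  have hη1 : η < 1 := by linarith
  obtain ⟨w, hw, hwinj⟩ := exists_weights m F η hη0 hη1
  have hwpos : ∀ j, 0 < w j := fun j => lt_of_le_of_lt (by linarith) (hw j).1
  set e : (Fin m → ℝ) → ℝ := fun α => ∑ j, α j * w j with he
  set E : ℝ := ν * (1 - η) with hE
  -- the real curve
  set zc : ℝ → (Fin m → ℂ) := fun t => fun j => ((w j * t : ℝ) : ℂ) with hzc
  set X : ℝ := Real.log c' - C' * Real.sqrt (2 * Real.pi) - 1 with hX
  set ρ₀ : ℝ := min (min (X / (1 - η)) ((Real.log (δ / Real.sqrt m) - 1) / (1 - η))) 0 with hρ₀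
  have h1η : 0 < 1 - η := by linarith
  -- basic estimates for t ≤ ρ₀
  have hwt : ∀ t ≤ ρ₀, ∀ j, w j * t ≤ (1 - η) * t := by
    intro t ht j
    have ht0 : t ≤ 0 := le_trans ht (min_le_right _ _)
    exact mul_le_mul_of_nonpos_right (hw j).1.le ht0
  have hwtX : ∀ t ≤ ρ₀, ∀ j, w j * t ≤ X := by
    intro t ht j
    refine le_trans (hwt t ht j) ?_
    have : t ≤ X / (1 - η) := le_trans ht (le_trans (min_le_left _ _) (min_le_left _ _))
    calc (1 - η) * t ≤ (1 - η) * (X / (1 - η)) := by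
          exact mul_le_mul_of_nonneg_left this h1η.le
      _ = X := by field_simp
  have hmemz : ∀ t ≤ ρ₀, zc t ∈ QDom c' C' m := by
    intro t ht j
    simp only [hzc, QDom, SQD, Set.mem_setOf_eq, Complex.ofReal_re, Complex.ofReal_im, abs_zero,
      Real.sqrt_zero, mul_zero, sub_zero]
    have := hwtX t ht j
    have hs : 0 ≤ C' * Real.sqrt (2 * Real.pi) := by positivity
    rw [hX] at this
    linarith
  have hmemzp : ∀ t ≤ ρ₀, zc t + pshift m i ∈ QDom c' C' m := by
    intro t ht j
    have hre : ((zc t + pshift m i) j).re = w j * t := by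
      simp [hzc, Complex.add_re, pshift_re]
    have him : |((zc t + pshift m i) j).im| ≤ 2 * Real.pi := by
      have : ((zc t + pshift m i) j).im = (if j = i then 2 * Real.pi else 0) := by
        simp [hzc, Complex.add_im, pshift_im]
      rw [this]
      split
      · rw [abs_of_nonneg (by positivity)]
      · simp [Real.pi_pos.le]
    simp only [QDom, SQD, Set.mem_setOf_eq]
    rw [hre]
    have hsq : Real.sqrt |((zc t + pshift m i) j).im| ≤ Real.sqrt (2 * Real.pi) :=
      Real.sqrt_le_sqrt him
    have := hwtX t ht j
    rw [hX] at this
    nlinarith [hC'.le, Real.sqrt_nonneg (2*Real.pi), hsq, hC']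
  have heN : ∀ t ≤ ρ₀, eNorm (zc t) ≤ Real.sqrt m * Real.exp ((1 - η) * t) := by
    intro t ht
    have : eNorm (zc t) ≤ Real.sqrt (∑ _j : Fin m, Real.exp ((1 - η) * t) ^ 2) := by
      apply Real.sqrt_le_sqrt
      apply Finset.sum_le_sum
      intro j _
      have : Real.exp (((zc t) j).re) ≤ Real.exp ((1 - η) * t) := by
        apply Real.exp_le_exp.2
        simpa [hzc] using hwt t ht j
      exact pow_le_pow_left₀ (Real.exp_pos _).le this 2
    refine le_trans this ?_
    rw [Finset.sum_const, Finset.card_univ, Fintype.card_fin, nsmul_eq_mul]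
    rw [Real.sqrt_mul (by positivity), Real.sqrt_sq (Real.exp_pos _).le]
  have heNδ : ∀ t ≤ ρ₀, eNorm (zc t) < δ := by
    intro t ht
    refine lt_of_le_of_lt (heN t ht) ?_
    have hsm : (0:ℝ) < Real.sqrt m := Real.sqrt_pos.2 (by exact_mod_cast hm)
    have hdm : 0 < δ / Real.sqrt m := div_pos hδ hsm
    have ht2 : t ≤ (Real.log (δ / Real.sqrt m) - 1) / (1 - η) :=
      le_trans ht (le_trans (min_le_left _ _) (min_le_right _ _))
    have h3 : (1 - η) * t ≤ Real.log (δ / Real.sqrt m) - 1 := by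
      calc (1 - η) * t ≤ (1 - η) * ((Real.log (δ / Real.sqrt m) - 1) / (1 - η)) :=
            mul_le_mul_of_nonneg_left ht2 h1η.le
        _ = Real.log (δ / Real.sqrt m) - 1 := by field_simp
    have h4 : Real.exp ((1 - η) * t) < δ / Real.sqrt m := by
      calc Real.exp ((1 - η) * t) ≤ Real.exp (Real.log (δ / Real.sqrt m) - 1) :=
            Real.exp_le_exp.2 h3
        _ < Real.exp (Real.log (δ / Real.sqrt m)) := Real.exp_lt_exp.2 (by linarith)
        _ = δ / Real.sqrt m := Real.exp_log hdm
    calc Real.sqrt m * Real.exp ((1 - η) * t) < Real.sqrt m * (δ / Real.sqrt m) :=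
          mul_lt_mul_of_pos_left h4 hsm
      _ = δ := by field_simp
  -- coefficients to kill
  set bcoef : (Fin m → ℝ) → ℂ :=
    fun α => a α * (Complex.exp ((α i : ℂ) * (((2 * Real.pi : ℝ) : ℂ) * Complex.I)) - 1) with hbc
  have hmain : ∀ t : ℝ, t ≤ ρ₀ →
      ‖∑ α ∈ F, bcoef α * Complex.exp ((t * e α : ℝ) : ℂ)‖ ≤
        (2 * Real.sqrt m ^ ν) * Real.exp (t * E) := by
    intro t ht
    have hz1 := hmemz t ht
    have hz2 := hmemzp t ht
    have hfz : f (zc t + pshift m i) = f (zc t) :=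
      hper i hik (zc t) (qdom_mono hsub hz1) (qdom_mono hsub hz2)
    have hA2 := hδbound (zc t) hz1 (heNδ t ht)
    have hA3 := hδbound (zc t + pshift m i) hz2
      (by rw [eNorm_add_pshift]; exact heNδ t ht)
    rw [eNorm_add_pshift] at hA3
    have hexpM : ∀ α : Fin m → ℝ, expMono α (zc t) = Complex.exp ((t * e α : ℝ) : ℂ) := by
      intro α
      unfold expMono
      congr 1
      have h1 : ∑ j, (α j : ℂ) * (zc t) j = ((∑ j, α j * (w j * t) : ℝ) : ℂ) := by
        rw [hzc]
        push_cast
        rfl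
      rw [h1]
      congr 1
      rw [he, Finset.mul_sum]
      refine Finset.sum_congr rfl fun j _ => by ring
    have hsum : ∑ α ∈ F, bcoef α * Complex.exp ((t * e α : ℝ) : ℂ) =
        (∑ α ∈ F, a α * expMono α (zc t + pshift m i)) -
          ∑ α ∈ F, a α * expMono α (zc t) := by
      rw [← Finset.sum_sub_distrib]
      refine Finset.sum_congr rfl fun α hα => ?_
      rw [expMono_pshift, ← hexpM α, hbc]
      ring
    have hdiff : (∑ α ∈ F, a α * expMono α (zc t + pshift m i)) -
        ∑ α ∈ F, a α * expMono α (zc t) =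
        ((∑ α ∈ F, a α * expMono α (zc t + pshift m i)) - f (zc t + pshift m i)) +
          (f (zc t) - ∑ α ∈ F, a α * expMono α (zc t)) := by
      rw [hfz]; ring
    have hnorm : ‖∑ α ∈ F, bcoef α * Complex.exp ((t * e α : ℝ) : ℂ)‖ ≤
        2 * eNorm (zc t) ^ ν := by
      rw [hsum, hdiff]
      calc ‖_ + _‖ ≤ ‖(∑ α ∈ F, a α * expMono α (zc t + pshift m i)) - f (zc t + pshift m i)‖ +
            ‖f (zc t) - ∑ α ∈ F, a α * expMono α (zc t)‖ := norm_add_le _ _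
        _ ≤ 1 * eNorm (zc t) ^ ν + 1 * eNorm (zc t) ^ ν := by
            rw [norm_sub_rev]
            exact add_le_add hA3 hA2
        _ = 2 * eNorm (zc t) ^ ν := by ring
    refine le_trans hnorm ?_
    have h5 : eNorm (zc t) ^ ν ≤ (Real.sqrt m * Real.exp ((1 - η) * t)) ^ ν :=
      Real.rpow_le_rpow (eNorm_nonneg _) (heN t ht) hν0.le
    have h6 : (Real.sqrt m * Real.exp ((1 - η) * t)) ^ ν =
        Real.sqrt m ^ ν * Real.exp (t * E) := by
      rw [Real.mul_rpow (Real.sqrt_nonneg _) (Real.exp_pos _).le, exp_rpow']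
      congr 2
      rw [hE]; ring
    rw [h6] at h5
    calc 2 * eNorm (zc t) ^ ν ≤ 2 * (Real.sqrt m ^ ν * Real.exp (t * E)) := by linarith
      _ = (2 * Real.sqrt m ^ ν) * Real.exp (t * E) := by ring
  -- apply the killing lemma
  have heE : e α₀ < E := by
    have h1 : e α₀ ≤ ∑ j, α₀ j := by
      rw [he]
      exact Finset.sum_le_sum fun j _ => mul_le_of_le_one_right (hα₀nn j) (hw j).2
    have h2 : E = ν - 1 / 2 := by
      rw [hE, hη]
      field_simp
    rw [h2, hν]
    linarith [h1]
  have hkill : bcoef α₀ = 0 :=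
    kill_coeffs e E (2 * Real.sqrt m ^ ν) ρ₀ F bcoef hwinj hmain α₀ hα₀F heE
  rw [hbc] at hkill
  rcases mul_eq_zero.1 hkill with h | h
  · exact absurd h hα₀
  · have hexp1 : Complex.exp ((α₀ i : ℂ) * (((2 * Real.pi : ℝ) : ℂ) * Complex.I)) = 1 :=
      sub_eq_zero.1 h
    rw [Complex.exp_eq_one_iff] at hexp1
    obtain ⟨n, hn⟩ := hexp1
    have h2pi : ((2 * Real.pi : ℝ) : ℂ) * Complex.I = 2 * (Real.pi : ℂ) * Complex.I := by
      push_cast; ring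
    rw [h2pi] at hn
    have hne : (2 * (Real.pi : ℂ) * Complex.I) ≠ 0 := by
      simp [Real.pi_ne_zero, Complex.I_ne_zero]
    have hc : (α₀ i : ℂ) = (n : ℂ) := mul_right_cancel₀ hne (by rw [hn])
    have hr : α₀ i = (n : ℝ) := by exact_mod_cast hc
    have hn0 : 0 ≤ n := by
      have : (0:ℝ) ≤ (n:ℝ) := hr ▸ hα₀nn i
      exact_mod_cast this
    exact ⟨n.toNat, by rw [hr]; exact_mod_cast (Int.toNat_of_nonneg hn0).symm⟩
end

section
open Filter Topology

lemma real_sqrt_eq_exp {x : ℝ} (hx : 0 < x) : Real.exp (Real.log x / 2) = Real.sqrt x := by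
  have h : Real.exp (Real.log x / 2) ^ 2 = x := by
    rw [sq, ← Real.exp_add]
    rw [show Real.log x / 2 + Real.log x / 2 = Real.log x by ring, Real.exp_log hx]
  conv_rhs => rw [← h]
  rw [Real.sqrt_sq (Real.exp_pos _).le]

/-- Principal square root via `exp (log v / 2)`. -/
def sqrtC (v : ℂ) : ℂ := Complex.exp (Complex.log v / 2)

lemma sqrtC_sq {v : ℂ} (hv : v ≠ 0) : sqrtC v ^ 2 = v := by
  rw [sqrtC, sq, ← Complex.exp_add]
  rw [show Complex.log v / 2 + Complex.log v / 2 = Complex.log v by ring, Complex.exp_log hv]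

lemma sqrtC_abs {v : ℂ} (hv : v ≠ 0) : ‖sqrtC v‖ = Real.sqrt (‖v‖) := by
  rw [sqrtC, Complex.norm_exp]
  have : (Complex.log v / 2).re = Real.log (‖v‖) / 2 := by
    simp [Complex.div_re, Complex.log_re]
  rw [this, real_sqrt_eq_exp (norm_pos_iff.2 hv)]

lemma sqrtC_re_nonneg (v : ℂ) : 0 ≤ (sqrtC v).re := by
  rw [sqrtC, Complex.exp_re]
  apply mul_nonneg (Real.exp_pos _).le
  apply Real.cos_nonneg_of_mem_Icc
  have h1 := Complex.arg_le_pi v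
  have h2 := Complex.neg_pi_lt_arg v
  constructor
  · have : (Complex.log v / 2).im = Complex.arg v / 2 := by
      simp [Complex.div_im, Complex.log_im]
    rw [this]; linarith
  · have : (Complex.log v / 2).im = Complex.arg v / 2 := by
      simp [Complex.div_im, Complex.log_im]
    rw [this]; linarith

lemma sqrtC_re_ge {v : ℂ} (hre : 0 ≤ v.re) (hv : v ≠ 0) :
    Real.sqrt (‖v‖) / 2 ≤ (sqrtC v).re := by
  set s := sqrtC v with hs
  have hsq : s ^ 2 = v := sqrtC_sq hv
  have hre2 : v.re = s.re ^ 2 - s.im ^ 2 := by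
    rw [← hsq]; rw [sq]; rw [Complex.mul_re]; ring
  have habs : s.re ^ 2 + s.im ^ 2 = ‖v‖ := by
    have h1 : ‖s‖ ^ 2 = ‖v‖ := by
      rw [hs, sqrtC_abs hv, Real.sq_sqrt (norm_nonneg v)]
    rw [← h1, Complex.sq_norm, Complex.normSq_apply]; ring
  have him : s.im ^ 2 ≤ s.re ^ 2 := by nlinarith [hre2 ▸ hre]
  have h2 : ‖v‖ / 2 ≤ s.re ^ 2 := by nlinarith
  have hsre : 0 ≤ s.re := sqrtC_re_nonneg v
  have : Real.sqrt (‖v‖ / 2) ≤ s.re := by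
    rw [show s.re = Real.sqrt (s.re ^ 2) from (Real.sqrt_sq hsre).symm]
    exact Real.sqrt_le_sqrt h2
  refine le_trans ?_ this
  have hd : Real.sqrt (‖v‖ / 2) = Real.sqrt (‖v‖) / Real.sqrt 2 :=
    Real.sqrt_div (norm_nonneg v) 2
  rw [hd]
  apply div_le_div_of_nonneg_left (Real.sqrt_nonneg _) (Real.sqrt_pos.2 (by norm_num))
  nlinarith [Real.sq_sqrt (by norm_num : (0:ℝ) ≤ 2), Real.sqrt_nonneg 2]

lemma sqrtC_im_le {v : ℂ} (hv : v ≠ 0) : |(sqrtC v).im| ≤ Real.sqrt (‖v‖) := by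
  rw [← sqrtC_abs hv]
  exact Complex.abs_im_le_norm _

lemma sqrtC_ofReal {x : ℝ} (hx : 0 < x) : sqrtC (x : ℂ) = (Real.sqrt x : ℂ) := by
  rw [sqrtC, ← Complex.ofReal_log hx.le]
  rw [show ((Real.log x : ℝ) : ℂ) / 2 = ((Real.log x / 2 : ℝ) : ℂ) by push_cast; ring]
  rw [← Complex.ofReal_exp, real_sqrt_eq_exp hx]

lemma sqrtC_differentiableAt {v : ℂ} (hv : v ∈ Complex.slitPlane) :
    DifferentiableAt ℂ sqrtC v :=
  ((Complex.differentiableAt_log hv).div_const 2).cexp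
end

section
open Filter Topology

/-- The map `w ↦ τ - (w+1) - B·√(w+1)` from the right half-plane into quadratic domains. -/
def psiMap (τ B : ℝ) (w : ℂ) : ℂ := (τ : ℂ) - (w + 1) - (B : ℂ) * sqrtC (w + 1)

lemma psiMap_re (τ B : ℝ) (w : ℂ) :
    (psiMap τ B w).re = τ - (w.re + 1) - B * (sqrtC (w + 1)).re := by
  simp [psiMap, Complex.sub_re, Complex.add_re, Complex.mul_re]

lemma psiMap_im (τ B : ℝ) (w : ℂ) :
    (psiMap τ B w).im = -w.im - B * (sqrtC (w + 1)).im := by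
  simp [psiMap, Complex.sub_im, Complex.add_im, Complex.mul_im]

lemma psiMap_re_le (τ B : ℝ) (hB : 0 ≤ B) (w : ℂ) (hw : 0 ≤ w.re) :
    (psiMap τ B w).re ≤ τ - 1 - w.re := by
  rw [psiMap_re]
  have := sqrtC_re_nonneg (w + 1)
  nlinarith

/-- Key geometric inequality: with `B = 16(C'+1)²` and `τ` small enough, the translated
image of the closed right half-plane under `psiMap` satisfies a quadratic-domain
constraint. -/
lemma psi_core {C' B : ℝ} (hC' : 0 ≤ C') (hB : B = 16 * (C' + 1) ^ 2)
    (y r L τ : ℝ) (hτ : τ ≤ L - r - C' * Real.sqrt |y| - C' * Real.sqrt B / 2)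
    (w : ℂ) (hw : 0 ≤ w.re) :
    r + (psiMap τ B w).re < L - C' * Real.sqrt |y + (psiMap τ B w).im| := by
  subst hB
  set B : ℝ := 16 * (C' + 1) ^ 2 with hB
  set v : ℂ := w + 1 with hv
  have hv1 : 1 ≤ v.re := by simp [hv, Complex.add_re]; linarith
  have hv0 : v ≠ 0 := fun h => by simp [h] at hv1; linarith
  have havb : 1 ≤ ‖v‖ := le_trans hv1 (Complex.re_le_norm v)
  set s : ℂ := sqrtC v with hs
  set X : ℝ := Real.sqrt (‖v‖) with hXd
  have hX1 : 1 ≤ X := by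
    rw [hXd, show (1:ℝ) = Real.sqrt 1 by simp]
    exact Real.sqrt_le_sqrt havb
  have hX0 : 0 ≤ X := by linarith
  have hsre : X / 2 ≤ s.re := sqrtC_re_ge (by linarith) hv0
  have hsim : |s.im| ≤ X := sqrtC_im_le hv0
  have hB0 : 0 ≤ B := by positivity
  have hsqB : Real.sqrt B = 4 * (C' + 1) := by
    rw [hB, show 16 * (C' + 1) ^ 2 = (4 * (C' + 1)) ^ 2 by ring,
      Real.sqrt_sq (by positivity)]
  have hvim : |v.im| ≤ ‖v‖ := Complex.abs_im_le_norm v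
  -- bound on the imaginary part
  have h1 : |y + (psiMap τ B w).im| ≤ |y| + (|v.im| + B * |s.im|) := by
    rw [psiMap_im]
    have hwim : w.im = v.im := by simp [hv, Complex.add_im]
    rw [hwim]
    calc |y + (-v.im - B * s.im)| ≤ |y| + |(-v.im - B * s.im)| := abs_add_le _ _
      _ ≤ |y| + (|v.im| + B * |s.im|) := by
          apply add_le_add le_rfl
          calc |(-v.im - B * s.im)| ≤ |(-v.im)| + |B * s.im| := abs_sub _ _
            _ = |v.im| + B * |s.im| := by rw [abs_neg, abs_mul, abs_of_nonneg hB0]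
  have h2 : Real.sqrt |y + (psiMap τ B w).im| ≤
      Real.sqrt |y| + (Real.sqrt |v.im| + Real.sqrt (B * |s.im|)) := by
    calc Real.sqrt |y + (psiMap τ B w).im| ≤ Real.sqrt (|y| + (|v.im| + B * |s.im|)) :=
          Real.sqrt_le_sqrt h1
      _ ≤ Real.sqrt |y| + Real.sqrt (|v.im| + B * |s.im|) :=
          sqrt_add_le _ _ (abs_nonneg y) (by positivity)
      _ ≤ _ := add_le_add le_rfl
          (sqrt_add_le _ _ (abs_nonneg _) (by positivity))
  have h3 : Real.sqrt |v.im| ≤ X := by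
    rw [hXd]; exact Real.sqrt_le_sqrt hvim
  have h4 : Real.sqrt (B * |s.im|) ≤ Real.sqrt B * ((1 + X) / 2) := by
    rw [Real.sqrt_mul hB0]
    apply mul_le_mul_of_nonneg_left _ (Real.sqrt_nonneg B)
    calc Real.sqrt |s.im| ≤ Real.sqrt X := Real.sqrt_le_sqrt hsim
      _ ≤ (1 + X) / 2 := sqrt_le_half_add X hX0
  have h5 : Real.sqrt |y + (psiMap τ B w).im| ≤
      Real.sqrt |y| + X + Real.sqrt B * ((1 + X) / 2) := by
    calc Real.sqrt |y + (psiMap τ B w).im| ≤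
        Real.sqrt |y| + (Real.sqrt |v.im| + Real.sqrt (B * |s.im|)) := h2
      _ ≤ _ := by linarith
  have h6 : C' * Real.sqrt |y + (psiMap τ B w).im| ≤
      C' * (Real.sqrt |y| + X + Real.sqrt B * ((1 + X) / 2)) :=
    mul_le_mul_of_nonneg_left h5 hC'
  have h7 : B * (X / 2) ≤ B * s.re := mul_le_mul_of_nonneg_left hsre hB0
  have hre : (psiMap τ B w).re = τ - v.re - B * s.re := by
    rw [psiMap_re]
    simp [hv, hs, Complex.add_re]
  rw [hre]
  rw [hsqB] at h6 hτ
  have hBval : B = 16 * (C' + 1) ^ 2 := hB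
  nlinarith [mul_nonneg (show (0:ℝ) ≤ 8*(C'+1)^2 - C' - 2*C'*(C'+1) by nlinarith)
    (show (0:ℝ) ≤ X - 1 by linarith), hv1, hτ, h6, h7, hBval]

/-- Continuity of a finite infimum of continuous functions. -/
lemma continuous_finset_inf' {ι : Type*} (s : Finset ι) (hs : s.Nonempty) (F : ι → ℝ → ℝ)
    (hF : ∀ j, Continuous (F j)) : Continuous fun y => s.inf' hs fun j => F j y := by
  induction hs using Finset.Nonempty.cons_induction with
  | singleton a => simpa using hF a
  | cons a t hat ht ih =>
      have : (fun y => (Finset.cons a t hat).inf' (Finset.cons_nonempty hat) fun j => F j y) =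
          fun y => min (F a y) (t.inf' ht fun j => F j y) := by
        funext y
        rw [Finset.inf'_cons]
      rw [this]
      exact (hF a).min ih
end

section
open Filter Topology

lemma forward_dir {m : ℕ} {c C : ℝ} {f : (Fin m → ℂ) → ℂ} {a : (Fin m → ℝ) → ℂ}
    (hf : DifferentiableOn ℂ f (QDom c C m)) (ha : HasAsymExp c C f a) (k : ℕ)
    (hnat : ∀ α, a α ≠ 0 → ∀ i : Fin m, k ≤ (i : ℕ) → ∃ q : ℕ, α i = q) :
    ∀ i : Fin m, k ≤ (i : ℕ) → ∀ z0 ∈ QDom c C m, z0 + pshift m i ∈ QDom c C m →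
      f (z0 + pshift m i) = f z0 := by
  intro i hik z0 hz0 hz0p
  have hm : 0 < m := i.pos
  have hne : (Finset.univ : Finset (Fin m)).Nonempty := ⟨i, Finset.mem_univ i⟩
  set p : Fin m → ℂ := pshift m i with hp
  set zl : ℂ → (Fin m → ℂ) := fun t j => z0 j + t with hzl
  set φ : ℂ → ℂ := fun t => f (zl t + p) - f (zl t) with hφ
  set T : Set ℂ := {t | zl t ∈ QDom c C m ∧ zl t + p ∈ QDom c C m} with hT
  have hzl0 : zl 0 = z0 := funext fun j => by simp [hzl]
  -- `T` is an open preconnected subgraph region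
  set Ψ : ℝ → ℝ := fun y => Finset.univ.inf' hne fun j =>
      min (Real.log c - C * Real.sqrt |(z0 j).im + y| - (z0 j).re)
          (Real.log c - C * Real.sqrt |(z0 j).im + (p j).im + y| - (z0 j).re) with hΨ
  have hΨcont : Continuous Ψ := by
    apply continuous_finset_inf' _ hne
    intro j
    apply Continuous.min
    · apply Continuous.sub _ continuous_const
      apply Continuous.sub continuous_const
      exact continuous_const.mul (Real.continuous_sqrt.comp
        ((continuous_const.add continuous_id).abs))
    · apply Continuous.sub _ continuous_const
      apply Continuous.sub continuous_const
      exact continuous_const.mul (Real.continuous_sqrt.comp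
        ((continuous_const.add continuous_id).abs))
  have hmem1 : ∀ (t : ℂ) (j : Fin m), ((zl t) j).re = (z0 j).re + t.re ∧
      ((zl t) j).im = (z0 j).im + t.im := fun t j => by
    constructor <;> simp [hzl]
  have hmem2 : ∀ (t : ℂ) (j : Fin m), ((zl t + p) j).re = (z0 j).re + t.re ∧
      ((zl t + p) j).im = (z0 j).im + t.im + (p j).im := fun t j => by
    constructor <;> simp [hzl, hp, Pi.add_apply, pshift_re, Complex.add_re, Complex.add_im]
  have hTeq : T = {t : ℂ | t.re < Ψ t.im} := by
    ext t
    simp only [hT, Set.mem_setOf_eq, hΨ, Finset.lt_inf'_iff, Finset.mem_univ, forall_true_left,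
      lt_min_iff, QDom, SQD]
    have habs : ∀ j : Fin m, |(z0 j).im + (p j).im + t.im| = |(z0 j).im + t.im + (p j).im| := by
      intro j; ring_nf
    constructor
    · intro ⟨h1, h2⟩ j
      have ha1 := h1 j
      have ha2 := h2 j
      rw [(hmem1 t j).1, (hmem1 t j).2] at ha1
      rw [(hmem2 t j).1, (hmem2 t j).2] at ha2
      refine ⟨by linarith, ?_⟩
      rw [habs j]
      linarith
    · intro h
      constructor
      · intro j
        have := (h j).1
        show ((zl t) j).re < _
        rw [(hmem1 t j).1, (hmem1 t j).2]
        linarith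
      · intro j
        have := (h j).2
        rw [habs j] at this
        show ((zl t + p) j).re < _
        rw [(hmem2 t j).1, (hmem2 t j).2]
        linarith
  have hTopen : IsOpen T := by
    rw [hTeq]
    exact isOpen_lt Complex.continuous_re (hΨcont.comp Complex.continuous_im)
  have hTpre : IsPreconnected T := by
    rw [hTeq]; exact preconnected_subgraph Ψ hΨcont
  have h0T : (0 : ℂ) ∈ T := by
    refine ⟨?_, ?_⟩ <;> rw [hzl0] <;> assumption
  -- differentiability of φ on T
  have hzldiff : Differentiable ℂ zl := by
    apply differentiable_pi.2
    intro j
    exact (differentiable_const _).add differentiable_id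
  have hzlpdiff : Differentiable ℂ (fun t => zl t + p) := by
    apply differentiable_pi.2
    intro j
    simp only [Pi.add_apply]
    exact ((differentiable_const _).add differentiable_id).add_const _
  have hφdiff : DifferentiableOn ℂ φ T := by
    intro t ht
    apply DifferentiableAt.differentiableWithinAt
    have h1 : DifferentiableAt ℂ f (zl t + p) :=
      hf.differentiableAt ((qdom_open c C m).mem_nhds ht.2)
    have h2 : DifferentiableAt ℂ f (zl t) :=
      hf.differentiableAt ((qdom_open c C m).mem_nhds ht.1)
    exact (h1.comp t (hzlpdiff t)).sub (h2.comp t (hzldiff t))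
  have hφana : AnalyticOnNhd ℂ φ T := hφdiff.analyticOnNhd hTopen
  -- quantitative data for ν = 1
  obtain ⟨c₁, C₁, hc₁, hC₁, hsub₁, F₁, hF₁, hb₁⟩ := ha.2 1 one_pos
  obtain ⟨δ₁, hδ₁, hδb₁⟩ := hb₁ 1 one_pos
  set M : ℝ := δ₁ + ∑ α ∈ F₁, ‖a α‖ with hM
  have hfbound : ∀ z ∈ QDom c₁ C₁ m, eNorm z < δ₁ → (∀ j, (z j).re ≤ 0) → ‖f z‖ ≤ M := by
    intro z hzmem hzN hzre
    have h1 := hδb₁ z hzmem hzN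
    have h2 : ‖∑ α ∈ F₁, a α * expMono α z‖ ≤ ∑ α ∈ F₁, ‖a α‖ := by
      refine le_trans (norm_sum_le _ _) (Finset.sum_le_sum fun α hα => ?_)
      rw [norm_mul]
      have hα0 : ∀ j, 0 ≤ α j := ha.1.1 α ((hF₁ α).1 hα).1
      calc ‖a α‖ * ‖expMono α z‖ ≤ ‖a α‖ * 1 :=
            mul_le_mul_of_nonneg_left (expMono_norm_le_one α z hα0 hzre) (norm_nonneg _)
        _ = ‖a α‖ := mul_one _
    calc ‖f z‖ = ‖(f z - ∑ α ∈ F₁, a α * expMono α z) + ∑ α ∈ F₁, a α * expMono α z‖ := by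
          congr 1; ring
      _ ≤ ‖f z - ∑ α ∈ F₁, a α * expMono α z‖ + ‖∑ α ∈ F₁, a α * expMono α z‖ := norm_add_le _ _
      _ ≤ 1 * eNorm z ^ (1:ℝ) + ∑ α ∈ F₁, ‖a α‖ := add_le_add h1 h2
      _ ≤ M := by
          rw [hM, one_mul, Real.rpow_one]
          have := hzN.le
          linarith
  -- the conformal map parameters
  set B : ℝ := 16 * (C₁ + 1) ^ 2 with hB
  have hB0 : 0 ≤ B := by rw [hB]; positivity
  set N0 : ℝ := eNorm z0 with hN0
  have hN0pos : 0 < N0 := eNorm_pos z0 hm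
  set τ : ℝ := min
      (min (Finset.univ.inf' hne fun j =>
              Real.log c₁ - (z0 j).re - C₁ * Real.sqrt |(z0 j).im| - C₁ * Real.sqrt B / 2)
           (Finset.univ.inf' hne fun j =>
              Real.log c₁ - (z0 j).re - C₁ * Real.sqrt |(z0 j).im + (p j).im| -
                C₁ * Real.sqrt B / 2))
      (min (Finset.univ.inf' hne fun j => -(z0 j).re) (Real.log (δ₁ / N0))) with hτ
  set ψ : ℂ → ℂ := psiMap τ B with hψ
  have hψrele : ∀ w : ℂ, 0 ≤ w.re → (ψ w).re ≤ τ - 1 - w.re := fun w hw =>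
    psiMap_re_le τ B hB0 w hw
  have hψT : ∀ w : ℂ, 0 ≤ w.re → zl (ψ w) ∈ QDom c₁ C₁ m ∧ zl (ψ w) + p ∈ QDom c₁ C₁ m ∧
      eNorm (zl (ψ w)) < δ₁ ∧ (∀ j, ((zl (ψ w)) j).re ≤ 0) := by
    intro w hw
    have hwre := hψrele w hw
    refine ⟨?_, ?_, ?_, ?_⟩
    · intro j
      show (zl (ψ w) j) ∈ SQD c₁ C₁
      simp only [SQD, Set.mem_setOf_eq]
      rw [(hmem1 (ψ w) j).1, (hmem1 (ψ w) j).2]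
      apply psi_core hC₁.le hB ((z0 j).im) ((z0 j).re) (Real.log c₁) τ _ w hw
      calc τ ≤ _ := min_le_left _ _
        _ ≤ _ := min_le_left _ _
        _ ≤ _ := Finset.inf'_le _ (Finset.mem_univ j)
    · intro j
      show ((zl (ψ w) + p) j) ∈ SQD c₁ C₁
      simp only [SQD, Set.mem_setOf_eq]
      rw [(hmem2 (ψ w) j).1, (hmem2 (ψ w) j).2]
      rw [show (z0 j).im + (ψ w).im + (p j).im = ((z0 j).im + (p j).im) + (ψ w).im by ring]
      apply psi_core hC₁.le hB ((z0 j).im + (p j).im) ((z0 j).re) (Real.log c₁) τ _ w hw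
      calc τ ≤ _ := min_le_left _ _
        _ ≤ _ := min_le_right _ _
        _ ≤ _ := Finset.inf'_le _ (Finset.mem_univ j)
    · have : eNorm (zl (ψ w)) = Real.exp ((ψ w).re) * N0 := by
        rw [hN0, hzl]
        exact eNorm_shift z0 (ψ w)
      rw [this]
      have hlt : (ψ w).re < Real.log (δ₁ / N0) := by
        have : τ ≤ Real.log (δ₁ / N0) :=
          le_trans (min_le_right _ _) (min_le_right _ _)
        linarith
      calc Real.exp ((ψ w).re) * N0 < Real.exp (Real.log (δ₁ / N0)) * N0 := by
            apply mul_lt_mul_of_pos_right (Real.exp_lt_exp.2 hlt) hN0pos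
        _ = δ₁ := by rw [Real.exp_log (div_pos hδ₁ hN0pos)]; field_simp
    · intro j
      rw [(hmem1 (ψ w) j).1]
      have : τ ≤ -(z0 j).re :=
        le_trans (min_le_right _ _)
          (le_trans (min_le_left _ _) (Finset.inf'_le _ (Finset.mem_univ j)))
      linarith
  have hψT' : ∀ w : ℂ, 0 ≤ w.re → ψ w ∈ T := by
    intro w hw
    obtain ⟨h1, h2, _, _⟩ := hψT w hw
    exact ⟨qdom_mono hsub₁ h1, qdom_mono hsub₁ h2⟩
  set Φ : ℂ → ℂ := fun w => φ (ψ w) with hΦ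
  have hΦbound : ∀ w : ℂ, 0 ≤ w.re → ‖Φ w‖ ≤ 2 * M := by
    intro w hw
    obtain ⟨h1, h2, h3, h4⟩ := hψT w hw
    have hb1 : ‖f (zl (ψ w) + p)‖ ≤ M := by
      apply hfbound _ h2
      · rw [hp]
        rw [show zl (ψ w) + pshift m i = zl (ψ w) + pshift m i from rfl]
        rw [eNorm_add_pshift]
        exact h3
      · intro j
        rw [(hmem2 (ψ w) j).1]
        have := h4 j
        rw [(hmem1 (ψ w) j).1] at this
        exact this
    have hb2 : ‖f (zl (ψ w))‖ ≤ M := hfbound _ h1 h3 h4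
    calc ‖Φ w‖ = ‖f (zl (ψ w) + p) - f (zl (ψ w))‖ := rfl
      _ ≤ ‖f (zl (ψ w) + p)‖ + ‖f (zl (ψ w))‖ := norm_sub_le _ _
      _ ≤ 2 * M := by linarith
  -- differentiability of `Φ` up to the boundary
  have hψdiff : ∀ w : ℂ, 0 ≤ w.re → DifferentiableAt ℂ ψ w := by
    intro w hw
    have hslit : (w + 1) ∈ Complex.slitPlane := by
      apply Complex.mem_slitPlane_iff.2
      left
      simp only [Complex.add_re, Complex.one_re]
      linarith
    have h1 : DifferentiableAt ℂ (fun w : ℂ => sqrtC (w + 1)) w :=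
      DifferentiableAt.comp (g := sqrtC) (f := fun w : ℂ => w + 1) w (sqrtC_differentiableAt hslit) (differentiableAt_id.add_const (1:ℂ))
    rw [hψ]
    unfold psiMap
    exact ((differentiableAt_const _).sub (differentiableAt_id.add_const (1:ℂ))).sub
      ((differentiableAt_const _).mul h1)
  have hΦdc : DiffContOnCl ℂ Φ {w : ℂ | 0 < w.re} := by
    apply DifferentiableOn.diffContOnCl
    rw [Complex.closure_setOf_lt_re]
    intro w hw
    have hw' : 0 ≤ w.re := hw
    exact ((hφdiff.differentiableAt (hTopen.mem_nhds (hψT' w hw'))).comp w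
      (hψdiff w hw')).differentiableWithinAt
  -- values of ψ on the nonnegative real axis
  have hψreal : ∀ x : ℝ, 0 ≤ x →
      ψ (x : ℂ) = ((τ - (x + 1) - B * Real.sqrt (x + 1) : ℝ) : ℂ) := by
    intro x hx
    rw [hψ]
    unfold psiMap
    have h1 : ((x : ℂ) + 1) = ((x + 1 : ℝ) : ℂ) := by push_cast; ring
    rw [h1, sqrtC_ofReal (by linarith : (0:ℝ) < x + 1)]
    push_cast
    ring
  -- superexponential decay along the real axis
  have hΦdecay : Asymptotics.SuperpolynomialDecay atTop Real.exp
      (fun x : ℝ => ‖Φ (x : ℂ)‖) := by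
    intro n
    obtain ⟨c', C', hc', hC', hsub', F', hF', hb'⟩ := ha.2 ((n : ℝ) + 1) (by positivity)
    obtain ⟨δ', hδ', hδb'⟩ := hb' 1 one_pos
    have hSinv : ∀ z : Fin m → ℂ,
        ∑ α ∈ F', a α * expMono α (z + p) = ∑ α ∈ F', a α * expMono α z := by
      refine fun z => Finset.sum_congr rfl fun α hα => ?_
      obtain ⟨q, hq⟩ := hnat α ((hF' α).1 hα).1 i hik
      rw [hp, expMono_pshift_nat α z i q hq]
    have hflat : ∀ t : ℝ, zl (t : ℂ) ∈ QDom c' C' m → zl (t : ℂ) + p ∈ QDom c' C' m →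
        eNorm (zl (t : ℂ)) < δ' →
        ‖φ (t : ℂ)‖ ≤ 2 * eNorm (zl (t : ℂ)) ^ ((n : ℝ) + 1) := by
      intro t h1 h2 h3
      have hA := hδb' _ h1 h3
      have hB2 := hδb' _ h2 (by rw [hp, eNorm_add_pshift]; exact h3)
      rw [hp, eNorm_add_pshift] at hB2
      have hid : φ (t : ℂ) =
          (f (zl (t:ℂ) + p) - ∑ α ∈ F', a α * expMono α (zl (t:ℂ) + p)) -
            (f (zl (t:ℂ)) - ∑ α ∈ F', a α * expMono α (zl (t:ℂ))) := by
        show f (zl (t:ℂ) + p) - f (zl (t:ℂ)) = _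
        rw [hSinv]
        ring
      rw [hid]
      calc ‖_ - _‖ ≤ ‖f (zl (t:ℂ) + p) - ∑ α ∈ F', a α * expMono α (zl (t:ℂ) + p)‖ +
            ‖f (zl (t:ℂ)) - ∑ α ∈ F', a α * expMono α (zl (t:ℂ))‖ := norm_sub_le _ _
        _ ≤ 1 * eNorm (zl (t:ℂ)) ^ ((n : ℝ) + 1) + 1 * eNorm (zl (t:ℂ)) ^ ((n : ℝ) + 1) := by
            rw [hp]
            exact add_le_add hB2 hA
        _ = 2 * eNorm (zl (t:ℂ)) ^ ((n : ℝ) + 1) := by ring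
    set ρ' : ℝ := min
        ((Finset.univ.inf' hne fun j =>
          min (Real.log c' - C' * Real.sqrt |(z0 j).im| - (z0 j).re)
              (Real.log c' - C' * Real.sqrt |(z0 j).im + (p j).im| - (z0 j).re)) - 1)
        (Real.log (δ' / N0) - 1) with hρ'
    have hdom : ∀ u : ℝ, u ≤ ρ' → zl (u : ℂ) ∈ QDom c' C' m ∧ zl (u : ℂ) + p ∈ QDom c' C' m ∧
        eNorm (zl (u : ℂ)) < δ' := by
      intro u hu
      have hu1 : ∀ j : Fin m, u ≤ min (Real.log c' - C' * Real.sqrt |(z0 j).im| - (z0 j).re)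
          (Real.log c' - C' * Real.sqrt |(z0 j).im + (p j).im| - (z0 j).re) - 1 := by
        intro j
        have h1 : ρ' ≤ _ - 1 := min_le_left _ _
        have h2 := Finset.inf'_le (s := (Finset.univ : Finset (Fin m)))
          (fun j => min (Real.log c' - C' * Real.sqrt |(z0 j).im| - (z0 j).re)
              (Real.log c' - C' * Real.sqrt |(z0 j).im + (p j).im| - (z0 j).re))
          (Finset.mem_univ j)
        linarith
      refine ⟨?_, ?_, ?_⟩
      · intro j
        show zl (u : ℂ) j ∈ SQD c' C'
        simp only [SQD, Set.mem_setOf_eq]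
        rw [(hmem1 _ j).1, (hmem1 _ j).2]
        simp only [Complex.ofReal_re, Complex.ofReal_im, add_zero]
        have hmin := hu1 j
        have h' := min_le_left (Real.log c' - C' * Real.sqrt |(z0 j).im| - (z0 j).re)
          (Real.log c' - C' * Real.sqrt |(z0 j).im + (p j).im| - (z0 j).re)
        linarith
      · intro j
        show (zl (u : ℂ) + p) j ∈ SQD c' C'
        simp only [SQD, Set.mem_setOf_eq]
        rw [(hmem2 _ j).1, (hmem2 _ j).2]
        simp only [Complex.ofReal_re, Complex.ofReal_im, add_zero]
        have hmin := hu1 j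
        have h' := min_le_right (Real.log c' - C' * Real.sqrt |(z0 j).im| - (z0 j).re)
          (Real.log c' - C' * Real.sqrt |(z0 j).im + (p j).im| - (z0 j).re)
        linarith
      · have he : eNorm (zl (u : ℂ)) = Real.exp u * N0 := by
          rw [hN0, hzl]
          have := eNorm_shift z0 (u : ℂ)
          simpa using this
        rw [he]
        have hu2 : u < Real.log (δ' / N0) := by
          have := min_le_right ((Finset.univ.inf' hne fun j =>
            min (Real.log c' - C' * Real.sqrt |(z0 j).im| - (z0 j).re)
                (Real.log c' - C' * Real.sqrt |(z0 j).im + (p j).im| - (z0 j).re)) - 1)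
            (Real.log (δ' / N0) - 1)
          rw [← hρ'] at this
          linarith
        calc Real.exp u * N0 < Real.exp (Real.log (δ' / N0)) * N0 :=
              mul_lt_mul_of_pos_right (Real.exp_lt_exp.2 hu2) hN0pos
          _ = δ' := by rw [Real.exp_log (div_pos hδ' hN0pos)]; field_simp
    -- the squeeze
    have hN0r : (0:ℝ) ≤ N0 := hN0pos.le
    apply squeeze_zero' (g := fun x : ℝ =>
      (2 * N0 ^ ((n : ℝ) + 1) * Real.exp (((n : ℝ) + 1) * (τ - 1))) * Real.exp (-x))
    · exact Eventually.of_forall fun x => by positivity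
    · filter_upwards [eventually_ge_atTop (0:ℝ), eventually_ge_atTop (τ - 1 - ρ')] with x hx0 hx1
      set u : ℝ := τ - (x + 1) - B * Real.sqrt (x + 1) with hu
      have hsq1 : (0:ℝ) ≤ Real.sqrt (x + 1) := Real.sqrt_nonneg _
      have hux : u ≤ τ - 1 - x := by
        rw [hu]
        nlinarith
      have hu' : u ≤ ρ' := by linarith
      obtain ⟨h1, h2, h3⟩ := hdom u hu'
      have hΦx : Φ (x : ℂ) = φ (u : ℂ) := by
        rw [hΦ]
        show φ (ψ (x:ℂ)) = _
        rw [hψreal x hx0, hu]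
      have hstep1 : ‖Φ (x : ℂ)‖ ≤ 2 * (Real.exp u * N0) ^ ((n : ℝ) + 1) := by
        rw [hΦx]
        have := hflat u h1 h2 h3
        have he : eNorm (zl (u : ℂ)) = Real.exp u * N0 := by
          rw [hN0, hzl]
          simpa using eNorm_shift z0 (u : ℂ)
        rwa [he] at this
      calc Real.exp x ^ n * ‖Φ (x : ℂ)‖ ≤
            Real.exp x ^ n * (2 * (Real.exp u * N0) ^ ((n : ℝ) + 1)) :=
            mul_le_mul_of_nonneg_left hstep1 (by positivity)
        _ = 2 * N0 ^ ((n : ℝ) + 1) * (Real.exp ((n:ℝ) * x) * Real.exp (u * ((n : ℝ) + 1))) := by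
            rw [Real.mul_rpow (Real.exp_pos u).le hN0r, exp_rpow']
            rw [show Real.exp ((n:ℝ) * x) = Real.exp x ^ n by
              rw [← Real.exp_nat_mul]]
            ring
        _ ≤ 2 * N0 ^ ((n : ℝ) + 1) *
              (Real.exp ((n:ℝ) * x) * Real.exp ((τ - 1 - x) * ((n : ℝ) + 1))) := by
            apply mul_le_mul_of_nonneg_left _ (by positivity)
            apply mul_le_mul_of_nonneg_left _ (Real.exp_pos _).le
            exact Real.exp_le_exp.2 (mul_le_mul_of_nonneg_right hux (by positivity))
        _ = (2 * N0 ^ ((n : ℝ) + 1) * Real.exp (((n : ℝ) + 1) * (τ - 1))) * Real.exp (-x) := by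
            rw [← Real.exp_add,
              show ((n:ℝ) * x + (τ - 1 - x) * ((n:ℝ) + 1)) =
                (((n:ℝ) + 1) * (τ - 1) + (-x)) by ring,
              Real.exp_add]
            ring
    · rw [show (0:ℝ) = (2 * N0 ^ ((n : ℝ) + 1) * Real.exp (((n : ℝ) + 1) * (τ - 1))) * 0 by ring]
      exact Tendsto.const_mul _ (Real.tendsto_exp_atBot.comp tendsto_neg_atTop_atBot)
  -- Phragmén–Lindelöf
  have hPL : Set.EqOn Φ 0 {z : ℂ | 0 ≤ z.re} := by
    apply PhragmenLindelof.eq_zero_on_right_half_plane_of_superexponential_decay hΦdc ?_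
      hΦdecay ⟨2 * M, fun x => hΦbound _ (by simp)⟩
    refine ⟨1, one_lt_two, 0, Asymptotics.IsBigO.of_bound (2 * M) ?_⟩
    rw [Filter.eventually_inf_principal]
    apply Eventually.of_forall
    intro z hz
    have h1 : Real.exp (0 * ‖z‖ ^ (1:ℝ)) = 1 := by norm_num
    rw [h1]
    simpa using hΦbound z (le_of_lt hz)
  -- conclusion via the identity theorem
  have hτ0T : ψ 0 ∈ T := hψT' 0 (by simp)
  have hψ0 : ψ 0 = ((τ - 1 - B : ℝ) : ℂ) := by
    have h := hψreal 0 le_rfl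
    simpa using h
  set xs : ℕ → ℝ := fun n => 1 / (n + 1) with hxs
  have hxs0 : ∀ n : ℕ, 0 < xs n := fun n => by positivity
  have hseq_zero : ∀ n : ℕ, φ (ψ ((xs n : ℝ) : ℂ)) = 0 := by
    intro n
    have := hPL (show ((xs n : ℝ) : ℂ) ∈ {z : ℂ | 0 ≤ z.re} by
      simp [Complex.ofReal_re]; positivity)
    simpa using this
  have hψxs : ∀ n : ℕ, ψ ((xs n : ℝ) : ℂ) =
      ((τ - (xs n + 1) - B * Real.sqrt (xs n + 1) : ℝ) : ℂ) := fun n =>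
    hψreal (xs n) (hxs0 n).le
  have hne' : ∀ n : ℕ, ψ ((xs n : ℝ) : ℂ) ≠ ψ 0 := by
    intro n
    rw [hψxs n, hψ0]
    intro hcon
    rw [Complex.ofReal_inj] at hcon
    have hsq : (1:ℝ) ≤ Real.sqrt (xs n + 1) := by
      have h1 : Real.sqrt 1 ≤ Real.sqrt (xs n + 1) := Real.sqrt_le_sqrt (by linarith [hxs0 n])
      rwa [Real.sqrt_one] at h1
    have hBs := mul_le_mul_of_nonneg_left hsq hB0
    rw [mul_one] at hBs
    linarith [hxs0 n, hBs]
  have htend : Tendsto (fun n : ℕ => ψ ((xs n : ℝ) : ℂ)) atTop (𝓝 (ψ 0)) := by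
    have hcont : Continuous fun x : ℝ => τ - (x + 1) - B * Real.sqrt (x + 1) := by
      apply Continuous.sub
      · exact continuous_const.sub (continuous_id.add continuous_const)
      · exact continuous_const.mul (Real.continuous_sqrt.comp (continuous_id.add continuous_const))
    have h0 : Tendsto xs atTop (𝓝 (0:ℝ)) := tendsto_one_div_add_atTop_nhds_zero_nat
    have h1 : Tendsto (fun n : ℕ => τ - (xs n + 1) - B * Real.sqrt (xs n + 1)) atTop
        (𝓝 (τ - (0 + 1) - B * Real.sqrt (0 + 1))) := (hcont.tendsto 0).comp h0
    have h2 : Tendsto (fun n : ℕ => ((τ - (xs n + 1) - B * Real.sqrt (xs n + 1) : ℝ) : ℂ)) atTop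
        (𝓝 ((τ - (0 + 1) - B * Real.sqrt (0 + 1) : ℝ) : ℂ)) :=
      (Complex.continuous_ofReal.tendsto _).comp h1
    have h3 : ((τ - (0 + 1) - B * Real.sqrt (0 + 1) : ℝ) : ℂ) = ψ 0 := by
      rw [hψ0]
      norm_num
    rw [h3] at h2
    refine h2.congr fun n => (hψxs n).symm
  have hfreq : ∃ᶠ t in 𝓝[≠] (ψ 0), φ t = 0 := by
    have htend2 : Tendsto (fun n : ℕ => ψ ((xs n : ℝ) : ℂ)) atTop (𝓝[≠] (ψ 0)) :=
      tendsto_nhdsWithin_of_tendsto_nhds_of_eventually_within _ htend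
        (Eventually.of_forall fun n => hne' n)
    exact htend2.frequently (Frequently.of_forall hseq_zero)
  have hφ0 : Set.EqOn φ 0 T :=
    hφana.eqOn_zero_of_preconnected_of_frequently_eq_zero hTpre hτ0T hfreq
  have hfinal : f (zl 0 + p) - f (zl 0) = 0 := hφ0 h0T
  rw [hzl0] at hfinal
  rw [hp] at hfinal
  exact sub_eq_zero.1 hfinal
end


/-- Characterization of the mixed classes: the exponents `αᵢ` for
`i ∈ {k+1,…,m}` in the expansion of `f` are all natural numbers if and only if `f` is
invariant under the monodromy translations `zᵢ ↦ zᵢ + 2π√−1` in those variables. -/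
theorem stmt4 (m : ℕ) (c C : ℝ) (hc : 0 < c) (hC : 0 < C)
    (f : (Fin m → ℂ) → ℂ) (hf : DifferentiableOn ℂ f (QDom c C m))
    (a : (Fin m → ℝ) → ℂ) (ha : HasAsymExp c C f a) (k : ℕ) (hk : k ≤ m) :
    (∀ α, a α ≠ 0 → ∀ i : Fin m, k ≤ (i : ℕ) → ∃ q : ℕ, α i = q) ↔
    (∀ i : Fin m, k ≤ (i : ℕ) → ∀ z ∈ QDom c C m,
      z + Pi.single i (((2 * Real.pi : ℝ) : ℂ) * Complex.I) ∈ QDom c C m →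
      f (z + Pi.single i (((2 * Real.pi : ℝ) : ℂ) * Complex.I)) = f z) := by
  constructor
  · intro hnat i hik z hz hzp
    exact forward_dir hf ha k hnat i hik z hz hzp
  · intro hper
    exact reverse_dir ha k hper
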